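/- For every real p with 0 < p < 1/2 and q = 1 − p, the total probability that the walk ever reaches level 1 is p/q: the infinite series Σ_{j=0}^{∞} (1/(j+1))·C(2j, j)·p^{j+1} q^{j} converges and its sum equals p/q. -/

import Mathlib

open Finset

private lemma centralBinom_le_four_pow (n : ℕ) : Nat.centralBinom n ≤ 4 ^ n := by
  induction n with
  | zero => simp [Nat.centralBinom]
  | succ n ih =>
    have h := Nat.succ_mul_centralBinom_succ n
    have h2 : (n + 1) * Nat.centralBinom (n + 1) ≤ (n + 1) * (4 * Nat.centralBinom n) := by
      rw [h]; ring_nf; nlinarith [Nat.centralBinom_pos n]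
    have := Nat.le_of_mul_le_mul_left h2 (Nat.succ_pos n)
    calc Nat.centralBinom (n + 1) ≤ 4 * Nat.centralBinom n := this
      _ ≤ 4 * 4 ^ n := by omega
      _ = 4 ^ (n + 1) := by ring

private lemma catalan_le_four_pow (n : ℕ) : (catalan n : ℝ) ≤ 4 ^ n := by
  have h1 : catalan n ≤ Nat.centralBinom n :=
    Nat.le_of_dvd (Nat.centralBinom_pos n) ⟨n + 1, by
      rw [← succ_mul_catalan_eq_centralBinom n]; ring⟩
  have := h1.trans (centralBinom_le_four_pow n)
  exact_mod_cast this

private lemma catalan_cast_eq (j : ℕ) :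
    (catalan j : ℝ) = ((2 * j).choose j : ℝ) / (j + 1) := by
  have h := succ_mul_catalan_eq_centralBinom j
  have h' : ((j : ℝ) + 1) * (catalan j : ℝ) = ((2 * j).choose j : ℝ) := by
    exact_mod_cast congrArg (Nat.cast (R := ℝ)) h
  have hj : (j : ℝ) + 1 ≠ 0 := by positivity
  rw [eq_div_iff hj, ← h']
  ring

private lemma summable_cat (x : ℝ) (hx0 : 0 ≤ x) (hx : x < 1 / 4) :
    Summable (fun j : ℕ => (catalan j : ℝ) * x ^ j) := by
  have hgsum : Summable (fun j : ℕ => (4 * x) ^ j) :=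
    summable_geometric_of_lt_one (by positivity) (by linarith)
  refine Summable.of_nonneg_of_le (fun j => by positivity) (fun j => ?_) hgsum
  calc (catalan j : ℝ) * x ^ j ≤ 4 ^ j * x ^ j :=
      mul_le_mul_of_nonneg_right (catalan_le_four_pow j) (by positivity)
    _ = (4 * x) ^ j := (mul_pow 4 x j).symm

private noncomputable def catS (x : ℝ) : ℝ := ∑' j : ℕ, (catalan j : ℝ) * x ^ j

private lemma catS_zero : catS 0 = 1 := by
  unfold catS
  rw [tsum_eq_single 0 (fun j hj => by
    simp [zero_pow hj])]
  simp

private lemma catS_quad (x : ℝ) (hx0 : 0 ≤ x) (hx : x < 1 / 4) :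
    x * catS x ^ 2 = catS x - 1 := by
  rcases eq_or_lt_of_le hx0 with h0 | h0
  · rw [← h0]; simp [catS_zero]
  set f : ℕ → ℝ := fun j => (catalan j : ℝ) * x ^ j with hf_def
  have hf : Summable f := summable_cat x hx0 hx
  have hfn : Summable (fun j => ‖f j‖) := by
    have : ∀ j, ‖f j‖ = f j := fun j => Real.norm_of_nonneg (by positivity)
    simpa [this] using hf
  have hprod : Summable fun ab : ℕ × ℕ => f ab.1 * f ab.2 :=
    summable_mul_of_summable_norm hfn hfn
  have hcauchy := Summable.tsum_mul_tsum_eq_tsum_sum_range hf hf hprod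
  -- inner sum equals catalan (n+1) * x ^ n
  have hinner : ∀ n : ℕ, (∑ k ∈ range (n + 1), f k * f (n - k))
      = (catalan (n + 1) : ℝ) * x ^ n := by
    intro n
    have hnat : catalan (n + 1) = ∑ k ∈ range (n + 1), catalan k * catalan (n - k) := by
      rw [catalan_succ']
      exact Nat.sum_antidiagonal_eq_sum_range_succ (fun i j => catalan i * catalan j) n
    rw [hnat]
    push_cast
    rw [Finset.sum_mul]
    apply Finset.sum_congr rfl
    intro k hk
    have hkn : k ≤ n := Nat.lt_succ_iff.mp (Finset.mem_range.mp hk)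
    have : x ^ k * x ^ (n - k) = x ^ n := by
      rw [← pow_add, Nat.add_sub_cancel' hkn]
    simp only [hf_def]
    calc (catalan k : ℝ) * x ^ k * ((catalan (n - k) : ℝ) * x ^ (n - k))
        = (catalan k : ℝ) * (catalan (n - k) : ℝ) * (x ^ k * x ^ (n - k)) := by ring
      _ = (catalan k : ℝ) * (catalan (n - k) : ℝ) * x ^ n := by rw [this]
  -- shifted sum
  have hshift : HasSum (fun n : ℕ => f (n + 1)) (catS x - 1) := by
    have h1 : HasSum f (catS x) := hf.hasSum
    have := (hasSum_nat_add_iff' (f := f) 1).mpr h1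
    simpa [hf_def] using this
  have hshift' : HasSum (fun n : ℕ => x * ((catalan (n + 1) : ℝ) * x ^ n)) (catS x - 1) := by
    have heq : (fun n : ℕ => x * ((catalan (n + 1) : ℝ) * x ^ n)) = fun n => f (n + 1) := by
      funext n; simp only [hf_def]; ring
    rw [heq]; exact hshift
  have hg : HasSum (fun n : ℕ => (catalan (n + 1) : ℝ) * x ^ n) (x⁻¹ * (catS x - 1)) := by
    have h2 := hshift'.mul_left x⁻¹
    have h3 : (fun n : ℕ => x⁻¹ * (x * ((catalan (n + 1) : ℝ) * x ^ n)))
        = fun n => (catalan (n + 1) : ℝ) * x ^ n := by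
      funext n; rw [← mul_assoc, inv_mul_cancel₀ (ne_of_gt h0), one_mul]
    rwa [h3] at h2
  have hT := hg.tsum_eq
  have key : catS x * catS x = x⁻¹ * (catS x - 1) := by
    rw [catS, hcauchy,
      show (∑' n : ℕ, ∑ k ∈ range (n + 1), f k * f (n - k))
        = ∑' n : ℕ, (catalan (n + 1) : ℝ) * x ^ n from tsum_congr hinner, hT]
    simp only [catS]
  field_simp [ne_of_gt h0] at key
  nlinarith [key]

private lemma catS_continuousOn (x₀ : ℝ) (hx0 : 0 ≤ x₀) (hx : x₀ < 1 / 4) :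
    ContinuousOn catS (Set.Icc 0 x₀) := by
  rw [continuousOn_iff_continuous_restrict]
  have : (Set.Icc 0 x₀).domRestrict catS
      = fun y : Set.Icc 0 x₀ => ∑' j : ℕ, (catalan j : ℝ) * (y : ℝ) ^ j := rfl
  rw [this]
  apply continuous_tsum (u := fun j => (4 * x₀) ^ j)
  · intro j
    exact (continuous_const.mul ((continuous_subtype_val).pow j))
  · exact summable_geometric_of_lt_one (by positivity) (by linarith)
  · rintro j ⟨y, hy0, hy1⟩
    have hy0' : (0:ℝ) ≤ y := hy0
    have : (catalan j : ℝ) * y ^ j ≤ 4 ^ j * x₀ ^ j := by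
      apply mul_le_mul (catalan_le_four_pow j) (pow_le_pow_left₀ hy0' hy1 j)
        (by positivity) (by positivity)
    rw [Real.norm_of_nonneg (by positivity)]
    calc (catalan j : ℝ) * y ^ j ≤ 4 ^ j * x₀ ^ j := this
      _ = (4 * x₀) ^ j := (mul_pow 4 x₀ j).symm

private lemma catS_root (x₀ : ℝ) (hx0 : 0 < x₀) (hx : x₀ < 1 / 4) :
    2 * x₀ * catS x₀ - 1 = -Real.sqrt (1 - 4 * x₀) := by
  set h : ℝ → ℝ := fun x => 2 * x * catS x - 1 with hh
  have hsq : ∀ x ∈ Set.Icc (0:ℝ) x₀, h x ^ 2 = 1 - 4 * x := by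
    rintro x ⟨h1, h2⟩
    have := catS_quad x h1 (lt_of_le_of_lt h2 hx)
    simp only [hh]
    nlinarith [this]
  have hcont : ContinuousOn h (Set.Icc 0 x₀) := by
    apply ContinuousOn.sub _ continuousOn_const
    exact ((continuous_const.mul continuous_id).continuousOn).mul
      (catS_continuousOn x₀ hx0.le hx)
  have hneg : h x₀ < 0 := by
    by_contra hc
    push_neg at hc
    have h0 : h 0 = -1 := by simp [hh, catS_zero]
    have : (0:ℝ) ∈ Set.Icc (h 0) (h x₀) := by
      constructor
      · rw [h0]; norm_num
      · exact hc
    obtain ⟨c, hc1, hc2⟩ := intermediate_value_Icc hx0.le hcont this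
    have := hsq c hc1
    rw [hc2] at this
    have : (1:ℝ) - 4 * c = 0 := by linarith [this]
    rcases hc1 with ⟨_, hcle⟩
    linarith
  have hx4 : (0:ℝ) < 1 - 4 * x₀ := by linarith
  have hsq' : h x₀ ^ 2 = 1 - 4 * x₀ := hsq x₀ ⟨hx0.le, le_refl _⟩
  have : Real.sqrt (1 - 4 * x₀) = -h x₀ := by
    rw [← hsq', Real.sqrt_sq_eq_abs, abs_of_neg hneg]
  simp only [hh] at this ⊢
  linarith [this]

theorem catalan_series_sum (p : ℝ) (hp0 : 0 < p) (hp : p < 1 / 2) :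
    HasSum (fun j : ℕ => (((2 * j).choose j : ℝ) / (j + 1)) * p ^ (j + 1) * (1 - p) ^ j)
      (p / (1 - p)) := by
  set q : ℝ := 1 - p with hq
  have hq0 : 0 < q := by simp [hq]; linarith
  set x₀ : ℝ := p * q with hx₀
  have hx0 : 0 < x₀ := mul_pos hp0 hq0
  have hxlt : x₀ < 1 / 4 := by
    have : (0:ℝ) < (1 - 2*p)^2 := by
      have : (0:ℝ) < 1 - 2*p := by linarith
      positivity
    simp only [hx₀, hq]; nlinarith
  have hroot := catS_root x₀ hx0 hxlt
  have hsqrt : Real.sqrt (1 - 4 * x₀) = 1 - 2 * p := by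
    have h1 : 1 - 4 * x₀ = (1 - 2*p)^2 := by simp only [hx₀, hq]; ring
    rw [h1, Real.sqrt_sq (by linarith)]
  rw [hsqrt] at hroot
  have hS : catS x₀ = 1 / q := by
    have hne : 2 * x₀ ≠ 0 := by positivity
    have : 2 * x₀ * catS x₀ = 2 * p := by linarith
    rw [hx₀] at this
    field_simp at this ⊢
    nlinarith [this]
  have hsum : HasSum (fun j : ℕ => (catalan j : ℝ) * x₀ ^ j) (1 / q) := by
    rw [← hS]
    exact (summable_cat x₀ hx0.le hxlt).hasSum
  have hfin := hsum.mul_left p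
  rw [mul_one_div] at hfin
  convert hfin using 2 with j
  · rfl
  rw [catalan_cast_eq j, hx₀, mul_pow]
  norm_cast
  ring
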